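/- Let V be a finitary variety, A an algebra in V, and suppose that for every congruence θ on every free algebra F(μ) one has C(V(θ)) = θ (i.e., the composition C∘V relative to A fixes the whole variety). Then A contains, up to isomorphism, every subdirectly irreducible algebra of V as a subalgebra; conversely, if A contains all subdirectly irreducible algebras up to isomorphism, then C(V(θ)) = θ holds for every congruence θ on every F(μ). -/

import Mathlib

universe u v w x

/-- A (possibly infinitary) algebraic signature: a type of operation symbols
together with an arity (an arbitrary type) for each. -/
structure Sig : Type (u + 1) where
  Op : Type u
  ar : Op → Type u

/-- An algebra structure for the signature `σ` on the type `α`. -/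
def SigStr (σ : Sig.{u}) (α : Type v) : Type (max u v) :=
  ∀ o : σ.Op, (σ.ar o → α) → α

/-- `f` is a homomorphism of `σ`-algebras. -/
def IsHom (σ : Sig.{u}) {α : Type v} {β : Type w} (Aa : SigStr σ α) (Bb : SigStr σ β)
    (f : α → β) : Prop :=
  ∀ (o : σ.Op) (z : σ.ar o → α), f (Aa o z) = Bb o fun i => f (z i)

/-- A congruence on a `σ`-algebra: an equivalence relation compatible with all the
operations (hence with all term-definable operations). -/
def IsCong (σ : Sig.{u}) {α : Type v} (Aa : SigStr σ α) (r : α → α → Prop) : Prop :=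
  Equivalence r ∧ ∀ (o : σ.Op) (z₁ z₂ : σ.ar o → α),
    (∀ i, r (z₁ i) (z₂ i)) → r (Aa o z₁) (Aa o z₂)

/-- A bundled `σ`-algebra. -/
structure SigAlg (σ : Sig.{u}) : Type (max u (v + 1)) where
  carrier : Type v
  op : SigStr σ carrier

/-- The direct product of a family of `σ`-algebras. -/
def prodAlg (σ : Sig.{u}) {ι : Type v} (B : ι → SigAlg.{u, v} σ) : SigAlg.{u, v} σ where
  carrier := ∀ i : ι, (B i).carrier
  op := fun o z i => (B i).op o fun j => z j i

/-- A class of `σ`-algebras closed under homomorphic images, subalgebras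
(isomorphic copies of embedded algebras) and direct products: a variety. -/
def ClosedHSP (σ : Sig.{u}) (K : SigAlg.{u, v} σ → Prop) : Prop :=
  (∀ A B : SigAlg.{u, v} σ, K A →
      (∃ f : A.carrier → B.carrier, IsHom σ A.op B.op f ∧ Function.Surjective f) → K B) ∧
    (∀ A B : SigAlg.{u, v} σ, K A →
      (∃ f : B.carrier → A.carrier, IsHom σ B.op A.op f ∧ Function.Injective f) → K B) ∧
    ∀ (ι : Type v) (B : ι → SigAlg.{u, v} σ), (∀ i, K (B i)) → K (prodAlg σ B)

/-- A subdirectly irreducible algebra: a nontrivial algebra with a smallest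
nontrivial congruence (equivalently, whenever it embeds subdirectly into a product,
some projection restricts to an isomorphism). -/
def SubdirIrrAlg (σ : Sig.{u}) (B : SigAlg.{u, v} σ) : Prop :=
  Nontrivial B.carrier ∧
    ∃ m : B.carrier → B.carrier → Prop, IsCong σ B.op m ∧ m ≠ (· = ·) ∧
      ∀ r : B.carrier → B.carrier → Prop, IsCong σ B.op r → r ≠ (· = ·) →
        ∀ x y, m x y → r x y

/-- A simple algebra: nontrivial, with no congruences besides equality and the
total relation. -/
def SimpleAlg (σ : Sig.{u}) (B : SigAlg.{u, v} σ) : Prop :=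
  Nontrivial B.carrier ∧
    ∀ r : B.carrier → B.carrier → Prop, IsCong σ B.op r →
      r = (· = ·) ∨ r = fun _ _ => True


section StmtTenAux

variable {σ : Sig.{u}}

/-- The kernel of a homomorphism is a congruence. -/
theorem isCong_ker' {α : Type v} {β : Type w} {Aa : SigStr σ α} {Bb : SigStr σ β}
    {f : α → β} (hf : IsHom σ Aa Bb f) : IsCong σ Aa (fun x y => f x = f y) := by
  refine ⟨⟨fun _ => rfl, Eq.symm, Eq.trans⟩, fun o z₁ z₂ h => ?_⟩
  show f (Aa o z₁) = f (Aa o z₂)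
  rw [hf o z₁, hf o z₂]
  exact congrArg (Bb o) (funext h)

/-- Quotient algebra structure by a relation. -/
noncomputable def quotOp {α : Type v} (Aa : SigStr σ α) (ψ : α → α → Prop) :
    SigStr σ (Quot ψ) :=
  fun o z => Quot.mk ψ (Aa o fun i => (z i).out)

theorem quot_mk_hom {α : Type v} {Aa : SigStr σ α} {ψ : α → α → Prop}
    (hψ : IsCong σ Aa ψ) : IsHom σ Aa (quotOp Aa ψ) (Quot.mk ψ) := by
  intro o z
  apply Quot.sound
  refine hψ.2 o z _ (fun i => ?_)
  exact hψ.1.symm (hψ.1.eqvGen_iff.mp (Quot.eqvGen_exact ((Quot.mk ψ (z i)).out_eq)))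

end StmtTenAux

/-- for a finitary variety `K` with free algebras `Fr μ` and a fixed
algebra `A` in `K`, the operator `C∘V` (relative to `A`) fixes every congruence on
every free algebra if, and only if, `A` contains (up to isomorphism) every
subdirectly irreducible algebra of `K` as a subalgebra. -/
theorem stmt_10 (σ : Sig.{u}) [∀ o : σ.Op, Finite (σ.ar o)]
    (K : SigAlg.{u, v} σ → Prop) (hvar : ClosedHSP σ K)
    (A : SigAlg.{u, v} σ) (hA : K A)
    (Fr : Type v → SigAlg.{u, v} σ) (η : ∀ μ : Type v, μ → (Fr μ).carrier)
    (hFrK : ∀ μ : Type v, K (Fr μ))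
    (hfree : ∀ (μ : Type v) (B : SigAlg.{u, v} σ), K B → ∀ a : μ → B.carrier,
      ∃! g : (Fr μ).carrier → B.carrier,
        IsHom σ (Fr μ).op B.op g ∧ ∀ β : μ, g (η μ β) = a β)
    (ext : ∀ μ : Type v, (μ → A.carrier) → (Fr μ).carrier → A.carrier)
    (hexthom : ∀ (μ : Type v) (a : μ → A.carrier), IsHom σ (Fr μ).op A.op (ext μ a))
    (hextη : ∀ (μ : Type v) (a : μ → A.carrier) (β : μ), ext μ a (η μ β) = a β) :
    (∀ (μ : Type v) (θ : (Fr μ).carrier → (Fr μ).carrier → Prop),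
        IsCong σ (Fr μ).op θ →
          ∀ p q : (Fr μ).carrier, θ p q ↔
            ∀ a : μ → A.carrier,
              (∀ p' q', θ p' q' → ext μ a p' = ext μ a q') → ext μ a p = ext μ a q) ↔
      ∀ B : SigAlg.{u, v} σ, K B → SubdirIrrAlg σ B →
        ∃ f : B.carrier → A.carrier, IsHom σ B.op A.op f ∧ Function.Injective f := by
  constructor
  · -- C∘V = id  →  every SI embeds in A
    intro hCV B hB hSI
    obtain ⟨hNT, m, hmCong, hmne, hmmin⟩ := hSI
    have hxy : ∃ x y, m x y ∧ x ≠ y := by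
      by_contra h
      push_neg at h
      apply hmne
      funext x y
      apply propext
      exact ⟨fun hm => by by_contra hne; exact hne (h x y hm), fun he => he ▸ hmCong.1.refl x⟩
    obtain ⟨x, y, hmxy, hxyne⟩ := hxy
    obtain ⟨h, ⟨hhom, hη⟩, -⟩ := hfree B.carrier B hB id
    have hθ : IsCong σ (Fr B.carrier).op (fun u v => h u = h v) := isCong_ker' hhom
    have hiff := hCV B.carrier _ hθ (η B.carrier x) (η B.carrier y)
    have hnpq : ¬ (h (η B.carrier x) = h (η B.carrier y)) := by
      rw [hη x, hη y]; exact hxyne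
    have hex : ¬ ∀ a : B.carrier → A.carrier,
        (∀ p' q', h p' = h q' → ext B.carrier a p' = ext B.carrier a q') →
          ext B.carrier a (η B.carrier x) = ext B.carrier a (η B.carrier y) :=
      fun hh => hnpq (hiff.mpr hh)
    push_neg at hex
    obtain ⟨a, hker, hne⟩ := hex
    have hsurj : Function.Surjective h := fun b => ⟨η B.carrier b, hη b⟩
    choose s hs using hsurj
    refine ⟨fun b => ext B.carrier a (s b), ?_, ?_⟩
    case refine_1 =>
      intro o z
      have h1 : h (s (B.op o z)) = h ((Fr B.carrier).op o fun i => s (z i)) := by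
        rw [hs, hhom]
        have : (fun i => h (s (z i))) = z := funext fun i => hs (z i)
        rw [this]
      calc ext B.carrier a (s (B.op o z))
          = ext B.carrier a ((Fr B.carrier).op o fun i => s (z i)) := hker _ _ h1
        _ = A.op o fun i => ext B.carrier a (s (z i)) := hexthom B.carrier a o _
    case refine_2 =>
      intro b1 b2 hb
      have hfhom : IsHom σ B.op A.op (fun b => ext B.carrier a (s b)) := by
        intro o z
        have h1 : h (s (B.op o z)) = h ((Fr B.carrier).op o fun i => s (z i)) := by
          rw [hs, hhom]
          have : (fun i => h (s (z i))) = z := funext fun i => hs (z i)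
          rw [this]
        calc ext B.carrier a (s (B.op o z))
            = ext B.carrier a ((Fr B.carrier).op o fun i => s (z i)) := hker _ _ h1
          _ = A.op o fun i => ext B.carrier a (s (z i)) := hexthom B.carrier a o _
      have hfx : ext B.carrier a (s x) = ext B.carrier a (η B.carrier x) :=
        hker _ _ (by rw [hs, hη]; rfl)
      have hfy : ext B.carrier a (s y) = ext B.carrier a (η B.carrier y) :=
        hker _ _ (by rw [hs, hη]; rfl)
      by_contra hbne
      have hkne : (fun u v => ext B.carrier a (s u) = ext B.carrier a (s v)) ≠ (· = ·) := by
        intro he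
        have : (ext B.carrier a (s b1) = ext B.carrier a (s b2)) = (b1 = b2) :=
          congrFun (congrFun he b1) b2
        exact hbne (this ▸ hb)
      have := hmmin _ (isCong_ker' hfhom) hkne x y hmxy
      rw [hfx, hfy] at this
      exact hne this
  · -- every SI embeds in A  →  C∘V = id
    intro hemb μ θ hθ p q
    constructor
    · intro hpq a ha; exact ha p q hpq
    intro hC
    by_contra hnpq
    -- Zorn's lemma: maximal congruence containing θ and avoiding (p,q)
    set S : Set (Set ((Fr μ).carrier × (Fr μ).carrier)) := {s | IsCong σ (Fr μ).op (fun u v => (u, v) ∈ s) ∧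
      (∀ u v, θ u v → (u, v) ∈ s) ∧ (p, q) ∉ s} with hS
    have hθS : {pr : (Fr μ).carrier × (Fr μ).carrier | θ pr.1 pr.2} ∈ S := ⟨by exact hθ, fun _ _ hh => hh, fun hh => hnpq hh⟩
    have hchainUB : ∀ c ⊆ S, IsChain (· ⊆ ·) c → c.Nonempty →
        ∃ ub ∈ S, ∀ s ∈ c, s ⊆ ub := by
      rintro c hcS hc ⟨s0, hs0⟩
      refine ⟨⋃₀ c, ⟨⟨⟨?_, ?_, ?_⟩, ?_⟩, ?_, ?_⟩, fun s hs => Set.subset_sUnion_of_mem hs⟩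
      · exact fun u => ⟨s0, hs0, (hcS hs0).1.1.refl u⟩
      · rintro u v ⟨t, ht, huv⟩
        exact ⟨t, ht, (hcS ht).1.1.symm huv⟩
      · rintro u v w ⟨t1, ht1, huv⟩ ⟨t2, ht2, hvw⟩
        rcases eq_or_ne t1 t2 with he | hne
        · exact ⟨t2, ht2, (hcS ht2).1.1.trans (he ▸ huv) hvw⟩
        · rcases hc ht1 ht2 hne with hle | hle
          · exact ⟨t2, ht2, (hcS ht2).1.1.trans (hle huv) hvw⟩
          · exact ⟨t1, ht1, (hcS ht1).1.1.trans huv (hle hvw)⟩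
      · intro o z1 z2 hz
        by_cases hne : Nonempty (σ.ar o)
        · choose t ht hmem using hz
          obtain ⟨tm, htmr, hmax⟩ := Set.Finite.exists_maximalFor id (Set.range t)
            (Set.finite_range t) ⟨t hne.some, Set.mem_range_self _⟩
          obtain ⟨j, hj⟩ := htmr
          have htmc : tm ∈ c := hj ▸ ht j
          have hsub : ∀ i, t i ⊆ tm := by
            intro i
            rcases eq_or_ne (t i) tm with he | hne'
            · exact he.le
            · rcases hc (ht i) htmc hne' with hle | hle
              · exact hle
              · exact hmax (Set.mem_range_self i) hle
          exact ⟨tm, htmc, (hcS htmc).1.2 o z1 z2 fun i => hsub i (hmem i)⟩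
        · exact ⟨s0, hs0, (hcS hs0).1.2 o z1 z2 fun i => absurd ⟨i⟩ hne⟩
      · exact fun u v hu => ⟨s0, hs0, (hcS hs0).2.1 u v hu⟩
      · rintro ⟨t, ht, hpq'⟩
        exact (hcS ht).2.2 hpq'
    obtain ⟨ψs, hθψ, hψmax⟩ := zorn_subset_nonempty S hchainUB _ hθS
    set ψ : (Fr μ).carrier → (Fr μ).carrier → Prop := fun u v => (u, v) ∈ ψs with hψdef
    have hψcong : IsCong σ (Fr μ).op ψ := hψmax.1.1
    have hθsub : ∀ u v, θ u v → ψ u v := hψmax.1.2.1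
    have hnpqψ : ¬ ψ p q := hψmax.1.2.2
    -- quotient algebra
    set Q : SigAlg.{u, v} σ := ⟨Quot ψ, quotOp (Fr μ).op ψ⟩ with hQ
    have hmkhom : IsHom σ (Fr μ).op Q.op (Quot.mk ψ) := quot_mk_hom hψcong
    have hmksurj : Function.Surjective (Quot.mk ψ : (Fr μ).carrier → Quot ψ) :=
      fun cq => ⟨cq.out, cq.out_eq⟩
    have hQK : K Q := hvar.1 (Fr μ) Q (hFrK μ) ⟨Quot.mk ψ, hmkhom, hmksurj⟩
    have hexact : ∀ {u v : (Fr μ).carrier}, Quot.mk ψ u = Quot.mk ψ v → ψ u v :=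
      fun hh => hψcong.1.eqvGen_iff.mp (Quot.eqvGen_exact hh)
    have hpqQ : Quot.mk ψ p ≠ Quot.mk ψ q := fun hh => hnpqψ (hexact hh)
    -- every nontrivial congruence on Q relates [p] and [q]
    have pull : ∀ r : Q.carrier → Q.carrier → Prop, IsCong σ Q.op r → r ≠ (· = ·) →
        r (Quot.mk ψ p) (Quot.mk ψ q) := by
      intro r hr hrne
      by_contra hrpq
      have hψrs : ∀ u v : (Fr μ).carrier, ψ u v → r (Quot.mk ψ u) (Quot.mk ψ v) := by
        intro u v huv
        rw [Quot.sound huv]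
        exact hr.1.refl _
      have hrsS : {pr : (Fr μ).carrier × (Fr μ).carrier | r (Quot.mk ψ pr.1) (Quot.mk ψ pr.2)} ∈ S := by
        refine ⟨⟨⟨fun u => hr.1.refl _, fun hh => hr.1.symm hh,
          fun h1 h2 => hr.1.trans h1 h2⟩, ?_⟩, ?_, hrpq⟩
        · intro o z1 z2 hz
          show r (Quot.mk ψ ((Fr μ).op o z1)) (Quot.mk ψ ((Fr μ).op o z2))
          rw [hmkhom o z1, hmkhom o z2]
          exact hr.2 o _ _ hz
        · exact fun u v huv => hψrs u v (hθsub u v huv)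
      have hrsub : ψs ⊆ {pr : (Fr μ).carrier × (Fr μ).carrier | r (Quot.mk ψ pr.1) (Quot.mk ψ pr.2)} :=
        fun pr hpr => hψrs pr.1 pr.2 hpr
      have hrψ := hψmax.2 hrsS hrsub
      apply hrne
      funext cq dq
      apply propext
      obtain ⟨u, rfl⟩ := hmksurj cq
      obtain ⟨v, rfl⟩ := hmksurj dq
      exact ⟨fun hruv => Quot.sound (hrψ hruv), fun he => he ▸ hr.1.refl _⟩
    -- Q is subdirectly irreducible
    have hSIQ : SubdirIrrAlg σ Q := by
      refine ⟨⟨_, _, hpqQ⟩,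
        fun cq dq => ∀ r : Q.carrier → Q.carrier → Prop, IsCong σ Q.op r → r ≠ (· = ·) → r cq dq,
        ⟨⟨fun cq r hr _ => hr.1.refl cq,
          fun hh r hr hn => hr.1.symm (hh r hr hn),
          fun h1 h2 r hr hn => hr.1.trans (h1 r hr hn) (h2 r hr hn)⟩,
         fun o z1 z2 hz r hr hn => hr.2 o _ _ fun i => hz i r hr hn⟩,
        ?_, fun r hr hn u v hm => hm r hr hn⟩
      intro he
      have hmpq : ∀ r : Q.carrier → Q.carrier → Prop, IsCong σ Q.op r → r ≠ (· = ·) →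
          r (Quot.mk ψ p) (Quot.mk ψ q) := fun r hr hn => pull r hr hn
      have h2 := congrFun (congrFun he (Quot.mk ψ p)) (Quot.mk ψ q)
      exact hpqQ (h2 ▸ hmpq)
    obtain ⟨f, hfhom, hfinj⟩ := hemb Q hQK hSIQ
    have hghom : IsHom σ (Fr μ).op A.op (fun u => f (Quot.mk ψ u)) := by
      intro o z
      show f (Quot.mk ψ ((Fr μ).op o z)) = _
      rw [hmkhom o z, hfhom o _]
    obtain ⟨w, -, huniq⟩ := hfree μ A hA (fun β => f (Quot.mk ψ (η μ β)))
    have he1 : ext μ (fun β => f (Quot.mk ψ (η μ β))) = w :=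
      huniq _ ⟨hexthom μ _, hextη μ _⟩
    have he2 : (fun u => f (Quot.mk ψ u)) = w := huniq _ ⟨hghom, fun β => rfl⟩
    have hext_g : ∀ u, ext μ (fun β => f (Quot.mk ψ (η μ β))) u = f (Quot.mk ψ u) := by
      intro u
      rw [he1, ← he2]
    have hfinal := hC (fun β => f (Quot.mk ψ (η μ β))) (by
      intro p' q' hθ'
      rw [hext_g, hext_g]
      exact congrArg f (Quot.sound (hθsub p' q' hθ')))
    rw [hext_g, hext_g] at hfinal
    exact hpqQ (hfinj hfinal)
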